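/- For $p \in (0,1]$, $\tau \ge 0$, $g > 0$, the function $J(\Delta) = \frac{\Delta}{2} + \frac{1}{2p} + \frac{\tau g + \frac{1-p}{2p}}{p(\Delta-1)+1}$ on $[1,\infty)$ attains its minimum at $\Delta^* = \max\left\{1,\; 1 + \frac{\sqrt{1 - p + 2p\tau g} - 1}{p}\right\}$. -/

import Mathlib

lemma aux_min (p c a b : ℝ) (hp : 0 < p) (hc : 0 ≤ c) (ha : 1 ≤ a) (hb : 1 ≤ b)
    (h : 0 ≤ (a - b) * (a * b - 2 * p * c)) :
    b / (2 * p) + c / b ≤ a / (2 * p) + c / a := by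
  have ha0 : (0:ℝ) < a := by linarith
  have hb0 : (0:ℝ) < b := by linarith
  rw [div_add_div _ _ (by positivity) (by positivity),
    div_add_div _ _ (by positivity) (by positivity),
    div_le_div_iff₀ (by positivity) (by positivity)]
  nlinarith [mul_pos hp (mul_pos ha0 hb0)]

/-- The threshold-policy average cost `J` attains its minimum over `[1,∞)` at
`Δ* = max{1, 1 + (√(1 - p + 2pτg) - 1)/p}`. -/
theorem stmt_3 (p τ g : ℝ) (hp0 : 0 < p) (hp1 : p ≤ 1) (hτ : 0 ≤ τ) (hg : 0 < g) :
    IsMinOn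
      (fun Δ : ℝ => Δ / 2 + 1 / (2 * p) + (τ * g + (1 - p) / (2 * p)) / (p * (Δ - 1) + 1))
      (Set.Ici (1 : ℝ))
      (max 1 (1 + (Real.sqrt (1 - p + 2 * p * τ * g) - 1) / p)) := by
  set s := Real.sqrt (1 - p + 2 * p * τ * g) with hs
  set c := τ * g + (1 - p) / (2 * p) with hcdef
  have hs0 : 0 ≤ s := Real.sqrt_nonneg _
  have hs2 : s ^ 2 = 1 - p + 2 * p * τ * g := by
    rw [hs, sq, Real.mul_self_sqrt (by nlinarith [mul_nonneg hτ hg.le])]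
  have hc : 0 ≤ c := by
    have : 0 ≤ (1 - p) / (2 * p) := div_nonneg (by linarith) (by linarith)
    have : 0 ≤ τ * g := mul_nonneg hτ hg.le
    rw [hcdef]; linarith
  have h2pc : 2 * p * c = s ^ 2 := by
    rw [hcdef, hs2]; field_simp; ring
  -- rewrite J x in terms of u = p(x-1)+1
  have hJ : ∀ x : ℝ, 1 ≤ x →
      x / 2 + 1 / (2 * p) + c / (p * (x - 1) + 1)
        = 1 / 2 + (p * (x - 1) + 1) / (2 * p) + c / (p * (x - 1) + 1) := by
    intro x hx
    have : (p * (x - 1) + 1) / (2 * p) = (x - 1) / 2 + 1 / (2 * p) := by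
      field_simp
    rw [this]; ring
  rw [isMinOn_iff]
  intro x hx
  simp only [Set.mem_Ici] at hx
  have hux : 1 ≤ p * (x - 1) + 1 := by nlinarith
  rcases le_total s 1 with h1 | h1
  · -- Δ* = 1
    have hmax : max 1 (1 + (s - 1) / p) = 1 := by
      apply max_eq_left
      have : (s - 1) / p ≤ 0 := div_nonpos_of_nonpos_of_nonneg (by linarith) hp0.le
      linarith
    simp only [hmax]
    rw [hJ x hx]
    simp only [sub_self, mul_zero, zero_add]
    have key : 1 / (2 * p) + c / 1 ≤ (p * (x - 1) + 1) / (2 * p) + c / (p * (x - 1) + 1) := by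
      apply aux_min p c _ _ hp0 hc hux le_rfl
      have hs1 : s ^ 2 ≤ 1 := by nlinarith
      nlinarith [hs1, h2pc]
    linarith [key]
  · -- Δ* = 1 + (s-1)/p
    have hmax : max 1 (1 + (s - 1) / p) = 1 + (s - 1) / p := by
      apply max_eq_right
      have : 0 ≤ (s - 1) / p := div_nonneg (by linarith) hp0.le
      linarith
    simp only [hmax]
    have hΔ1 : 1 ≤ 1 + (s - 1) / p := by
      have : 0 ≤ (s - 1) / p := div_nonneg (by linarith) hp0.le
      linarith
    have hu : p * ((1 + (s - 1) / p) - 1) + 1 = s := by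
      field_simp; ring
    rw [hJ x hx, hJ _ hΔ1, hu]
    have key : s / (2 * p) + c / s ≤ (p * (x - 1) + 1) / (2 * p) + c / (p * (x - 1) + 1) := by
      apply aux_min p c _ _ hp0 hc hux h1
      rw [h2pc]; nlinarith [mul_nonneg hs0 (sq_nonneg (p * (x - 1) + 1 - s))]
    linarith
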